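/- The function ρ₁(z) = H'(z) ∫₀^z ( H'(s)^{-2} ∫_s^∞ τ H'(τ)² dτ ) ds, with H(x) = tanh(x/√2), satisfies -ρ₁'' + (3H² - 1)ρ₁ = z H'(z) on ℝ. -/

import Mathlib

open MeasureTheory

noncomputable def H : ℝ → ℝ := fun x => Real.tanh (x / Real.sqrt 2)

open Real Set



lemma tanh_sq (x : ℝ) : 1 - Real.tanh x ^ 2 = (Real.cosh x ^ 2)⁻¹ := by
  have h := Real.cosh_sq_sub_sinh_sq x
  have hc := (Real.cosh_pos x).ne'
  have key : (1 - Real.tanh x ^ 2) * Real.cosh x ^ 2 = 1 := by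
    rw [Real.tanh_eq_sinh_div_cosh]
    field_simp
    linarith
  exact eq_inv_of_mul_eq_one_left key

lemma hasDerivAt_tanh (x : ℝ) : HasDerivAt Real.tanh (1 - Real.tanh x ^ 2) x := by
  have h := (Real.hasDerivAt_sinh x).div (Real.hasDerivAt_cosh x) (Real.cosh_pos x).ne'
  have heq : Real.tanh = fun y => Real.sinh y / Real.cosh y := by
    funext y; exact Real.tanh_eq_sinh_div_cosh y
  rw [heq]
  refine h.congr_deriv ?_
  have hc := (Real.cosh_pos x).ne'
  have h2 := Real.cosh_sq_sub_sinh_sq x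
  field_simp

noncomputable def P : ℝ → ℝ := fun x => (1 - H x ^ 2) / Real.sqrt 2

lemma hasDerivAt_H (x : ℝ) : HasDerivAt H (P x) x := by
  have h1 : HasDerivAt (fun y : ℝ => y / Real.sqrt 2) (1 / Real.sqrt 2) x :=
    (hasDerivAt_id x).div_const _
  have := (hasDerivAt_tanh (x / Real.sqrt 2)).comp x h1
  refine this.congr_deriv ?_
  simp [P, H]; ring

lemma deriv_H : deriv H = P := funext fun x => (hasDerivAt_H x).deriv

lemma P_pos (x : ℝ) : 0 < P x := by
  have h := tanh_sq (x / Real.sqrt 2)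
  have : 0 < 1 - H x ^ 2 := by
    rw [H, h]; positivity
  have h2 : (0:ℝ) < Real.sqrt 2 := by positivity
  exact div_pos this h2



noncomputable def Phi : ℝ → ℝ := fun τ => τ * P τ ^ 2

lemma continuous_H : Continuous H :=
  Differentiable.continuous (fun x => (hasDerivAt_H x).differentiableAt)

lemma continuous_P : Continuous P :=
  (continuous_const.sub (continuous_H.pow 2)).div_const _

lemma continuous_Phi : Continuous Phi :=
  continuous_id.mul (continuous_P.pow 2)

lemma sqrt2_mul_self : Real.sqrt 2 * Real.sqrt 2 = 2 := Real.mul_self_sqrt (by norm_num)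
lemma sqrt2_pos : (0:ℝ) < Real.sqrt 2 := by positivity
lemma one_lt_sqrt2 : (1:ℝ) < Real.sqrt 2 := by nlinarith [sqrt2_mul_self, sqrt2_pos]

lemma P_le (x : ℝ) (hx : 0 ≤ x) : P x ≤ 4 * Real.exp (-(Real.sqrt 2) * x) := by
  set y := x / Real.sqrt 2 with hy
  have hb : 1 - H x ^ 2 = (Real.cosh y ^ 2)⁻¹ := tanh_sq _
  have hcosh : Real.exp y / 2 ≤ Real.cosh y := by
    rw [Real.cosh_eq]
    have := Real.exp_pos (-y)
    linarith
  have hcpos : (0:ℝ) < Real.exp y / 2 := by positivity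
  have hinv : (Real.cosh y ^ 2)⁻¹ ≤ ((Real.exp y / 2) ^ 2)⁻¹ := by
    apply inv_anti₀ (by positivity)
    exact pow_le_pow_left₀ hcpos.le hcosh 2
  have hexp2 : Real.exp y ^ 2 = Real.exp (Real.sqrt 2 * x) := by
    rw [← Real.exp_nat_mul]
    congr 1
    rw [hy]
    field_simp
    linear_combination (-x) * sqrt2_mul_self
  have he : ((Real.exp y / 2) ^ 2)⁻¹ = 4 * Real.exp (-(Real.sqrt 2) * x) := by
    rw [div_pow, hexp2, inv_div, neg_mul, Real.exp_neg]
    norm_num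
    ring
  have hP : P x ≤ 1 - H x ^ 2 := by
    rw [P]
    apply div_le_self _ one_lt_sqrt2.le
    rw [hb]; positivity
  calc P x ≤ 1 - H x ^ 2 := hP
    _ = (Real.cosh y ^ 2)⁻¹ := hb
    _ ≤ ((Real.exp y / 2) ^ 2)⁻¹ := hinv
    _ = 4 * Real.exp (-(Real.sqrt 2) * x) := he

lemma Phi_le (x : ℝ) (hx : 0 ≤ x) :
    |Phi x| ≤ 16 * Real.exp (-(2 * Real.sqrt 2 - 1) * x) := by
  have h1 : P x ≤ 4 * Real.exp (-(Real.sqrt 2) * x) := P_le x hx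
  have h0 : 0 < P x := P_pos x
  have hxe : x ≤ Real.exp x := by linarith [Real.add_one_le_exp x]
  have habs : |Phi x| = x * P x ^ 2 := by
    rw [Phi, abs_of_nonneg]; positivity
  rw [habs]
  have hsq : P x ^ 2 ≤ 16 * Real.exp (-(2 * Real.sqrt 2) * x) := by
    have := mul_le_mul h1 h1 h0.le (by positivity)
    calc P x ^ 2 = P x * P x := sq (P x) ▸ (by ring)
      _ ≤ (4 * Real.exp (-(Real.sqrt 2) * x)) * (4 * Real.exp (-(Real.sqrt 2) * x)) := this
      _ = 16 * Real.exp (-(2 * Real.sqrt 2) * x) := by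
          rw [show (4:ℝ) * Real.exp (-(Real.sqrt 2) * x) * (4 * Real.exp (-(Real.sqrt 2) * x))
              = 16 * (Real.exp (-(Real.sqrt 2) * x) * Real.exp (-(Real.sqrt 2) * x)) by ring,
            ← Real.exp_add]
          congr 1; ring
  calc x * P x ^ 2 ≤ Real.exp x * (16 * Real.exp (-(2 * Real.sqrt 2) * x)) := by
        apply mul_le_mul hxe hsq (by positivity) (Real.exp_pos x).le
    _ = 16 * Real.exp (-(2 * Real.sqrt 2 - 1) * x) := by
        rw [← mul_assoc, mul_comm (Real.exp x) 16, mul_assoc, ← Real.exp_add]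
        congr 1; ring

lemma integrableOn_Phi (s : ℝ) : IntegrableOn Phi (Ioi s) := by
  have hmin : Ioi s ⊆ Ioi (min s 0) := Ioi_subset_Ioi (min_le_left s 0)
  apply IntegrableOn.mono_set _ hmin
  have hsplit : Ioc (min s 0) 0 ∪ Ioi (0:ℝ) = Ioi (min s 0) :=
    Ioc_union_Ioi_eq_Ioi (min_le_right s 0)
  rw [← hsplit]
  apply IntegrableOn.union
  · exact (continuous_Phi.integrableOn_Icc).mono_set Ioc_subset_Icc_self
  · have hb : (0:ℝ) < 2 * Real.sqrt 2 - 1 := by nlinarith [one_lt_sqrt2]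
    have hInt : IntegrableOn (fun x => 16 * Real.exp (-(2 * Real.sqrt 2 - 1) * x)) (Ioi 0) :=
      (exp_neg_integrableOn_Ioi 0 hb).const_mul 16
    apply Integrable.mono' hInt (continuous_Phi.aestronglyMeasurable.restrict)
    filter_upwards [ae_restrict_mem measurableSet_Ioi] with x hx
    exact Phi_le x (le_of_lt hx)


noncomputable def Q : ℝ → ℝ := fun x => -(2 * H x * P x) / Real.sqrt 2
noncomputable def R : ℝ → ℝ := fun x => -(2 * (P x * P x + H x * Q x)) / Real.sqrt 2

lemma hasDerivAt_P (x : ℝ) : HasDerivAt P (Q x) x := by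
  have h := (((hasDerivAt_H x).pow 2).const_sub 1).div_const (Real.sqrt 2)
  refine h.congr_deriv ?_
  unfold Q
  push_cast
  ring

lemma hasDerivAt_Q (x : ℝ) : HasDerivAt Q (R x) x := by
  have h := (((hasDerivAt_H x).mul (hasDerivAt_P x)).const_mul 2).neg.div_const (Real.sqrt 2)
  have hQeq : Q = fun y => -(2 * (H y * P y)) / Real.sqrt 2 := by
    funext y; unfold Q; ring
  rw [hQeq]
  exact h

noncomputable def F : ℝ → ℝ := fun s => ∫ τ in Ioi s, Phi τ

lemma F_split (a b : ℝ) (hab : a ≤ b) : F a = (∫ τ in a..b, Phi τ) + F b := by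
  rw [intervalIntegral.integral_of_le hab, F, F,
    ← setIntegral_union (Ioc_disjoint_Ioi le_rfl) measurableSet_Ioi
      ((integrableOn_Phi a).mono_set Ioc_subset_Ioi_self) (integrableOn_Phi b),
    Ioc_union_Ioi_eq_Ioi hab]

lemma F_eq (s : ℝ) : F s = F 0 - ∫ τ in (0:ℝ)..s, Phi τ := by
  rcases le_total s 0 with h | h
  · rw [F_split s 0 h, intervalIntegral.integral_symm]; ring
  · rw [F_split 0 s h]; ring

lemma hasDerivAt_F (s : ℝ) : HasDerivAt F (-(Phi s)) s := by
  have h : HasDerivAt (fun u => ∫ τ in (0:ℝ)..u, Phi τ) (Phi s) s :=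
    intervalIntegral.integral_hasDerivAt_right (continuous_Phi.intervalIntegrable _ _)
      (continuous_Phi.stronglyMeasurable.stronglyMeasurableAtFilter)
      continuous_Phi.continuousAt
  have h2 := h.const_sub (F 0)
  exact h2.congr_of_eventuallyEq (Filter.Eventually.of_forall fun x => F_eq x)

lemma continuous_F : Continuous F :=
  Differentiable.continuous fun x => (hasDerivAt_F x).differentiableAt

noncomputable def f : ℝ → ℝ := fun s => ((P s) ^ 2)⁻¹ * F s

lemma continuous_f : Continuous f := by
  apply Continuous.mul _ continuous_F
  exact (continuous_P.pow 2).inv₀ fun x => pow_ne_zero 2 (P_pos x).ne'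

noncomputable def f' : ℝ → ℝ := fun s =>
  -(2 * P s * Q s) / ((P s ^ 2) ^ 2) * F s + ((P s) ^ 2)⁻¹ * (-(Phi s))

lemma hasDerivAt_f (s : ℝ) : HasDerivAt f (f' s) s := by
  have hp : P s ^ 2 ≠ 0 := pow_ne_zero 2 (P_pos s).ne'
  have h1 : HasDerivAt (fun y => ((P y) ^ 2)⁻¹) (-(2 * P s * Q s) / ((P s ^ 2) ^ 2)) s := by
    have := (((hasDerivAt_P s).pow 2)).inv hp
    refine this.congr_deriv ?_
    simp only [Pi.pow_apply]; push_cast; ring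
  exact h1.mul (hasDerivAt_F s)

noncomputable def g : ℝ → ℝ := fun z => ∫ s in (0:ℝ)..z, f s

lemma hasDerivAt_g (z : ℝ) : HasDerivAt g (f z) z :=
  intervalIntegral.integral_hasDerivAt_right (continuous_f.intervalIntegrable _ _)
    (continuous_f.stronglyMeasurable.stronglyMeasurableAtFilter)
    continuous_f.continuousAt

noncomputable def ρ₁ : ℝ → ℝ := fun z =>
  deriv H z * ∫ s in (0 : ℝ)..z, ((deriv H s) ^ 2)⁻¹ * ∫ τ in Set.Ioi s, τ * (deriv H τ) ^ 2


lemma rho_eq : ρ₁ = fun z => P z * g z := by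
  funext z
  show deriv H z * _ = _
  rw [deriv_H]
  rfl

lemma hasDerivAt_rho (z : ℝ) : HasDerivAt ρ₁ (Q z * g z + P z * f z) z := by
  rw [rho_eq]
  exact (hasDerivAt_P z).mul (hasDerivAt_g z)

lemma deriv_rho : deriv ρ₁ = fun z => Q z * g z + P z * f z :=
  funext fun z => (hasDerivAt_rho z).deriv

lemma deriv2_rho (z : ℝ) :
    deriv (deriv ρ₁) z = R z * g z + Q z * f z + (Q z * f z + P z * f' z) := by
  rw [deriv_rho]
  exact (((hasDerivAt_Q z).mul (hasDerivAt_g z)).add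
    ((hasDerivAt_P z).mul (hasDerivAt_f z))).deriv

/-- `ρ₁(z) = H'(z) ∫₀^z ( H'(s)^{-2} ∫_s^∞ τ H'(τ)² dτ ) ds` satisfies
`-ρ₁'' + (3H² - 1)ρ₁ = z H'(z)` on `ℝ`. -/
theorem stmt_13 : ∀ z : ℝ,
    -(deriv (deriv ρ₁) z) + (3 * (H z) ^ 2 - 1) * ρ₁ z = z * deriv H z := by
  intro z
  rw [deriv2_rho, rho_eq, deriv_H]
  show -(R z * g z + Q z * f z + (Q z * f z + P z * f' z)) + (3 * H z ^ 2 - 1) * (P z * g z)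
      = z * P z
  have hp : P z ≠ 0 := (P_pos z).ne'
  have hs2 : Real.sqrt 2 ≠ 0 := sqrt2_pos.ne'
  have hPz : Real.sqrt 2 * P z = 1 - H z ^ 2 := by
    unfold P; field_simp
  simp only [R, Q, f, f', Phi]
  field_simp
  ring_nf
  linear_combination (2 * P z ^ 2 * g z) * hPz
    + (P z ^ 2 * g z * (3 * H z ^ 2 - 1)) * Real.sq_sqrt (by norm_num : (0:ℝ) ≤ 2)
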